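/- Let M be a uniformly discrete, bounded metric space with a distinguished point 0, let (x_i, y_i)_{i=1}^n be pairs of distinct points of M, let λ_i > 0 with Σ_{i=1}^n λ_i = 1, and let f : M → ℝ be 1-Lipschitz with f(0) = 0 and f(x_i) − f(y_i) = d(x_i, y_i) for all i. Assume: (α) for every pair of distinct j, k ∈ {1,…,n} there is a finite sequence of pairwise distinct indices i_1, …, i_m ∈ {1,…,n} containing both j and k such that d(x_{i_1},y_{i_1}) + ⋯ + d(x_{i_m},y_{i_m}) = d(x_{i_1},y_{i_2}) + ⋯ + d(x_{i_m},y_{i_1}); and (β) for every x ∈ M there are distinct points s, t ∈ {x_1, y_1, …, x_n, y_n} with f(t) − f(s) = d(t,s) and d(s,x) + d(t,x) = d(s,t). Let X be a real normed space, x ∈ X with ‖x‖ = 1, and x* a continuous linear functional on X with ‖x*‖ = 1 and x*(x) = 1, such that for every ε > 0 there is δ > 0 such that every continuous linear functional v* with ‖v*‖ ≤ 1 and v*(x) ≥ 1 − δ satisfies ‖v* − x*‖ ≤ ε. Then for every ε > 0 there is δ > 0 such that every map g from M to the dual X* with g(0) = 0, ‖g(p) − g(q)‖ ≤ d(p,q)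 for all p, q ∈ M, and Σ_{i=1}^n λ_i (g(x_i) − g(y_i))(x)/d(x_i, y_i) > 1 − δ satisfies sup_{p∈M} ‖g(p) − f(p)·x*‖ ≤ ε. -/

import Mathlib

lemma stmt15_cycsum (m : ℕ) (hm : 1 ≤ m) (F : ℕ → ℝ) :
    ∑ r ∈ Finset.range m, F ((r + 1) % m) = ∑ r ∈ Finset.range m, F r := by
  apply Finset.sum_nbij' (i := fun r => (r + 1) % m) (j := fun r => (r + (m - 1)) % m)
  · intro a ha
    exact Finset.mem_range.2 (Nat.mod_lt _ hm)
  · intro a ha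
    exact Finset.mem_range.2 (Nat.mod_lt _ hm)
  · intro a ha
    have ha' := Finset.mem_range.1 ha
    rw [Nat.mod_add_mod]
    have : a + 1 + (m - 1) = a + m := by omega
    rw [this, Nat.add_mod_right, Nat.mod_eq_of_lt ha']
  · intro a ha
    have ha' := Finset.mem_range.1 ha
    rw [Nat.mod_add_mod]
    have : a + (m - 1) + 1 = a + m := by omega
    rw [this, Nat.add_mod_right, Nat.mod_eq_of_lt ha']
  · intro a ha
    rfl

set_option maxHeartbeats 1000000 in
private lemma stmt15_A1 (n e u a b : ℝ) (hn : 1 ≤ n) (he : 0 < e)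
    (ht : u ≤ a + b) (h1 : a ≤ e) (h2 : b ≤ e) : u ≤ 4 * n * e := by nlinarith

private lemma stmt15_A2 (r e u a b c d : ℝ) (hr : 0 ≤ r) (he : 0 < e)
    (ht : u ≤ a + b) (h1 : a ≤ e) (h2 : b ≤ c + d) (h3 : c ≤ e) (h4 : d ≤ 2 * r * e) :
    u ≤ 2 * (r + 1) * e := by nlinarith

private lemma stmt15_A3 (n r e u a b : ℝ) (hr : 0 ≤ r) (hrn : r ≤ n - 1) (he : 0 < e)
    (ht : u ≤ a + b) (h1 : a ≤ e) (h2 : b ≤ 2 * r * e) : u ≤ (2 * n - 1) * e := by nlinarith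

private lemma stmt15_A4 (n e u a b : ℝ) (hn : 1 ≤ n) (he : 0 < e)
    (ht : u ≤ a + b) (h1 : a ≤ (2 * n - 1) * e) (h2 : b ≤ (2 * n - 1) * e) :
    u ≤ 4 * n * e := by nlinarith

private lemma stmt15_A5 (n e0 e1 D ε u a b c : ℝ) (hn : 1 ≤ n) (he : 0 < e0 * D)
    (h10 : e1 * D ≤ e0 * D) (heq : e0 * ((4 * n + 2) * D) = ε)
    (ht : u ≤ a + b) (h1 : a ≤ e0 * D) (h2 : b ≤ c + e0 * D) (h3 : c ≤ 4 * n * (e1 * D)) :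
    u ≤ ε := by nlinarith


set_option maxHeartbeats 1000000 in
/-- Theorem 4.1(b) of the paper in dual form: if `μ = Σ λᵢ m_{xᵢ,yᵢ}` is a finitely supported
point of Fréchet differentiability of `ℱ(M)` with derivative `f` (conditions (α) and (β)) and
`v` is a point of Fréchet differentiability of `X` with derivative `xs`, then near-norming
functionals for `μ ⊗ v` in `Lip₀(M, X*) = (ℱ(M) ⊗̂_π X)*` are uniformly close to `f ⊗ xs`. -/
theorem stmt_15 {M : Type*} [MetricSpace M]
    (hud : ∃ θ : ℝ, 0 < θ ∧ ∀ p q : M, p ≠ q → θ ≤ dist p q)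
    (hbd : ∃ D : ℝ, ∀ p q : M, dist p q ≤ D)
    (z : M) (n : ℕ) (x y : Fin n → M) (hxy : ∀ i : Fin n, x i ≠ y i)
    (lam : Fin n → ℝ) (hlam : ∀ i, 0 < lam i) (hlam1 : ∑ i, lam i = 1)
    (f : M → ℝ) (hf : LipschitzWith 1 f) (hf0 : f z = 0)
    (hfi : ∀ i : Fin n, f (x i) - f (y i) = dist (x i) (y i))
    (halpha : ∀ j k : Fin n, j ≠ k →
      ∃ (m : ℕ) (i : ℕ → Fin n), 1 ≤ m ∧
        (∀ r < m, ∀ s < m, i r = i s → r = s) ∧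
        (∃ r < m, i r = j) ∧ (∃ r < m, i r = k) ∧
        ∑ r ∈ Finset.range m, dist (x (i r)) (y (i r)) =
          ∑ r ∈ Finset.range m, dist (x (i r)) (y (i ((r + 1) % m))))
    (hbeta : ∀ p : M, ∃ s t : M, s ≠ t ∧
      (∃ i : Fin n, s = x i ∨ s = y i) ∧ (∃ i : Fin n, t = x i ∨ t = y i) ∧
      f t - f s = dist t s ∧ dist s p + dist t p = dist s t)
    {X : Type*} [NormedAddCommGroup X] [NormedSpace ℝ X]
    (v : X) (hv : ‖v‖ = 1)
    (xs : X →L[ℝ] ℝ) (hxs : ‖xs‖ = 1) (hxsv : xs v = 1)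
    (hfrechet : ∀ ε : ℝ, 0 < ε → ∃ δ : ℝ, 0 < δ ∧
      ∀ vs : X →L[ℝ] ℝ, ‖vs‖ ≤ 1 → 1 - δ ≤ vs v → ‖vs - xs‖ ≤ ε) :
    ∀ ε : ℝ, 0 < ε → ∃ δ : ℝ, 0 < δ ∧
      ∀ g : M → (X →L[ℝ] ℝ), g z = 0 →
        (∀ p q : M, ‖g p - g q‖ ≤ dist p q) →
        1 - δ < ∑ i, lam i * ((g (x i) - g (y i)) v / dist (x i) (y i)) →
        ∀ p : M, ‖g p - f p • xs‖ ≤ ε := by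
  intro ε hε
  obtain ⟨θ, hθpos, hθd⟩ := hud
  obtain ⟨D₀, hD₀⟩ := hbd
  obtain ⟨D, hD1, hD⟩ : ∃ D : ℝ, 1 ≤ D ∧ ∀ p q : M, dist p q ≤ D :=
    ⟨max D₀ 1, le_max_right _ _, fun p q => le_trans (hD₀ p q) (le_max_left _ _)⟩
  have hDpos : (0:ℝ) < D := lt_of_lt_of_le one_pos hD1
  have hn : 0 < n := by
    rcases Nat.eq_zero_or_pos n with h0 | h0
    · subst h0; simp at hlam1
    · exact h0
  have hnR : (1:ℝ) ≤ (n:ℝ) := by exact_mod_cast hn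
  have hn0 : (n:ℝ) ≠ 0 := by positivity
  obtain ⟨lmin, hlmin_pos, hlmin_le⟩ : ∃ l : ℝ, 0 < l ∧ ∀ i, l ≤ lam i := by
    have hne : (Finset.univ : Finset (Fin n)).Nonempty := ⟨⟨0, hn⟩, Finset.mem_univ _⟩
    refine ⟨Finset.univ.inf' hne lam, ?_, fun i => Finset.inf'_le _ (Finset.mem_univ i)⟩
    rw [Finset.lt_inf'_iff]
    exact fun i _ => hlam i
  have hdpos : ∀ i : Fin n, 0 < dist (x i) (y i) := fun i => dist_pos.2 (hxy i)
  have hdD : ∀ i : Fin n, dist (x i) (y i) ≤ D := fun i => hD _ _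
  -- Lipschitz bound for f
  have hfL : ∀ a b : M, f a - f b ≤ dist a b := by
    intro a b
    have h1 := hf.dist_le_mul a b
    rw [Real.dist_eq] at h1
    push_cast at h1
    have := le_abs_self (f a - f b)
    linarith
  -- constants
  have hc1 : (0:ℝ) < (4 * n + 2) * D := mul_pos (by positivity) hDpos
  obtain ⟨ε₀, hε₀pos, hε₀eq⟩ : ∃ e : ℝ, 0 < e ∧ e * ((4 * n + 2) * D) = ε :=
    ⟨ε / ((4 * n + 2) * D), div_pos hε hc1, div_mul_cancel₀ ε hc1.ne'⟩
  obtain ⟨δ₁, hδ₁pos, hδ₁⟩ := hfrechet ε₀ hε₀pos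
  have hc2 : (0:ℝ) < (4 * n + 1) * D := mul_pos (by positivity) hDpos
  obtain ⟨ε₁, hε₁pos, hε₁le₀, hε₁key⟩ :
      ∃ e : ℝ, 0 < e ∧ e ≤ ε₀ ∧ 4 * n * (e * D) ≤ δ₁ * θ := by
    refine ⟨min ε₀ (δ₁ * θ / ((4 * n + 1) * D)),
      lt_min hε₀pos (div_pos (mul_pos hδ₁pos hθpos) hc2), min_le_left _ _, ?_⟩
    have hle : min ε₀ (δ₁ * θ / ((4 * n + 1) * D)) ≤ δ₁ * θ / ((4 * n + 1) * D) :=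
      min_le_right _ _
    have key : δ₁ * θ / ((4 * n + 1) * D) * ((4 * n + 1) * D) = δ₁ * θ :=
      div_mul_cancel₀ _ hc2.ne'
    have hq : 0 ≤ δ₁ * θ / ((4 * n + 1) * D) :=
      le_of_lt (div_pos (mul_pos hδ₁pos hθpos) hc2)
    nlinarith [mul_le_mul_of_nonneg_right hle (le_of_lt hc2),
      mul_nonneg (mul_nonneg hq hDpos.le) (show (0:ℝ) ≤ (n:ℝ) by positivity),
      mul_nonneg hq hDpos.le]
  obtain ⟨δ₂, hδ₂pos, hδ₂⟩ := hfrechet ε₁ hε₁pos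
  have hc3 : (0:ℝ) < 2 * n * D := mul_pos (by positivity) hDpos
  obtain ⟨δ, hδpos, hδkey⟩ : ∃ d : ℝ, 0 < d ∧ D * (d / lmin) ≤ δ₂ * θ / (2 * n) := by
    refine ⟨δ₂ * θ * lmin / (2 * n * D),
      div_pos (mul_pos (mul_pos hδ₂pos hθpos) hlmin_pos) hc3, le_of_eq ?_⟩
    field_simp
  refine ⟨δ, hδpos, ?_⟩
  intro g hg0 hgL hsum
  -- evaluation bound
  have hev : ∀ T : X →L[ℝ] ℝ, |T v| ≤ ‖T‖ := by
    intro T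
    have h1 := T.le_opNorm v
    rwa [hv, mul_one, Real.norm_eq_abs] at h1
  have hgub : ∀ a b : M, (g a - g b) v ≤ dist a b := by
    intro a b
    have h1 := hev (g a - g b)
    have h2 := hgL a b
    have h3 := le_abs_self ((g a - g b) v)
    linarith
  -- per-edge slack bound
  have hσbound : ∀ i : Fin n,
      dist (x i) (y i) - (g (x i) - g (y i)) v ≤ δ₂ * θ / (2 * n) := by
    intro i
    have hsum2 : ∑ j, lam j * (1 - (g (x j) - g (y j)) v / dist (x j) (y j)) < δ := by
      have he : ∑ j, lam j * (1 - (g (x j) - g (y j)) v / dist (x j) (y j))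
          = (∑ j, lam j) - ∑ j, lam j * ((g (x j) - g (y j)) v / dist (x j) (y j)) := by
        rw [← Finset.sum_sub_distrib]
        exact Finset.sum_congr rfl (fun j _ => by ring)
      rw [he, hlam1]
      linarith
    have hnn2 : ∀ j ∈ (Finset.univ : Finset (Fin n)),
        0 ≤ lam j * (1 - (g (x j) - g (y j)) v / dist (x j) (y j)) := by
      intro j _
      have h1 : (g (x j) - g (y j)) v / dist (x j) (y j) ≤ 1 :=
        (div_le_one (hdpos j)).2 (hgub _ _)
      have := (hlam j).le
      nlinarith
    have hterm_lt : lam i * (1 - (g (x i) - g (y i)) v / dist (x i) (y i)) < δ :=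
      lt_of_le_of_lt (Finset.single_le_sum hnn2 (Finset.mem_univ i)) hsum2
    have hd := hdpos i
    have hli := hlam i
    have h1 : 1 - (g (x i) - g (y i)) v / dist (x i) (y i) < δ / lam i := by
      rw [lt_div_iff₀ hli, mul_comm]
      exact hterm_lt
    have h2 : dist (x i) (y i) - (g (x i) - g (y i)) v
        = dist (x i) (y i) * (1 - (g (x i) - g (y i)) v / dist (x i) (y i)) := by
      field_simp
    have h3 : δ / lam i ≤ δ / lmin :=
      div_le_div_of_nonneg_left hδpos.le hlmin_pos (hlmin_le i)
    have h5 : 0 ≤ 1 - (g (x i) - g (y i)) v / dist (x i) (y i) := by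
      have h1' : (g (x i) - g (y i)) v / dist (x i) (y i) ≤ 1 :=
        (div_le_one (hdpos i)).2 (hgub _ _)
      linarith
    calc dist (x i) (y i) - (g (x i) - g (y i)) v
        = dist (x i) (y i) * (1 - (g (x i) - g (y i)) v / dist (x i) (y i)) := h2
      _ ≤ D * (δ / lmin) := by
          apply mul_le_mul (hdD i) _ h5 hDpos.le
          exact le_trans h1.le h3
      _ ≤ δ₂ * θ / (2 * n) := hδkey
  have hσθ : δ₂ * θ / (2 * n) ≤ δ₂ * θ := by
    have h1 : (1:ℝ) ≤ 2 * n := by nlinarith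
    exact div_le_self (mul_pos hδ₂pos hθpos).le h1
  -- Fréchet pair lemma
  have hpair : ∀ ε' δ' : ℝ, 0 < ε' → 0 < δ' →
      (∀ vs : X →L[ℝ] ℝ, ‖vs‖ ≤ 1 → 1 - δ' ≤ vs v → ‖vs - xs‖ ≤ ε') →
      ∀ a b : M, dist a b - δ' * θ ≤ (g a - g b) v →
      ‖(g a - g b) - dist a b • xs‖ ≤ ε' * D := by
    intro ε' δ' hε' hδ' hF a b htight
    by_cases hab : a = b
    · subst hab
      simp only [sub_self, dist_self, zero_smul, sub_zero, norm_zero]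
      exact le_of_lt (mul_pos hε' hDpos)
    · have hd : 0 < dist a b := dist_pos.2 hab
      have hdθ' : θ ≤ dist a b := hθd a b hab
      set w : X →L[ℝ] ℝ := (dist a b)⁻¹ • (g a - g b) with hw
      have hwn : ‖w‖ ≤ 1 := by
        rw [hw]
        calc ‖(dist a b)⁻¹ • (g a - g b)‖ ≤ ‖(dist a b)⁻¹‖ * ‖g a - g b‖ :=
              ContinuousLinearMap.opNorm_smul_le _ _
          _ = (dist a b)⁻¹ * ‖g a - g b‖ := by
              rw [Real.norm_eq_abs, abs_inv, abs_of_pos hd]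
          _ ≤ (dist a b)⁻¹ * dist a b :=
              mul_le_mul_of_nonneg_left (hgL a b) (by positivity)
          _ = 1 := inv_mul_cancel₀ hd.ne'
      have hwv : 1 - δ' ≤ w v := by
        have h2 : (1 - δ') * dist a b ≤ (g a - g b) v := by
          have e : (1 - δ') * dist a b = dist a b - δ' * dist a b := by ring
          rw [e]
          have := mul_le_mul_of_nonneg_left hdθ' hδ'.le
          linarith
        have h3 : w v = (dist a b)⁻¹ * ((g a - g b) v) := by
          rw [hw]; simp [ContinuousLinearMap.smul_apply]
        rw [h3]
        calc 1 - δ' = (dist a b)⁻¹ * ((1 - δ') * dist a b) := by field_simp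
          _ ≤ (dist a b)⁻¹ * ((g a - g b) v) :=
              mul_le_mul_of_nonneg_left h2 (by positivity)
      have hwx := hF w hwn hwv
      have heq : (g a - g b) - dist a b • xs = dist a b • (w - xs) := by
        rw [hw, smul_sub, smul_smul, mul_inv_cancel₀ hd.ne', one_smul]
      rw [heq]
      calc ‖dist a b • (w - xs)‖ ≤ ‖dist a b‖ * ‖w - xs‖ :=
          ContinuousLinearMap.opNorm_smul_le _ _
        _ = dist a b * ‖w - xs‖ := by rw [Real.norm_eq_abs, abs_of_pos hd]
        _ ≤ D * ε' := mul_le_mul (hD a b) hwx (norm_nonneg _) hDpos.le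
        _ = ε' * D := mul_comm _ _
  -- h and its difference formula
  set h : M → (X →L[ℝ] ℝ) := fun q => g q - f q • xs with hhdef
  have hdiffeq : ∀ a b : M, h a - h b = (g a - g b) - (f a - f b) • xs := by
    intro a b
    simp only [hhdef, sub_smul]
    module
  have hedgeh : ∀ i : Fin n, ‖h (x i) - h (y i)‖ ≤ ε₁ * D := by
    intro i
    rw [hdiffeq, hfi i]
    apply hpair ε₁ δ₂ hε₁pos hδ₂pos hδ₂
    have := hσbound i
    linarith [hσθ]
  -- within-edge helper
  have hWE : ∀ (j : Fin n) (a : M), (a = x j ∨ a = y j) → ‖h a - h (y j)‖ ≤ ε₁ * D := by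
    intro j a ha
    rcases ha with rfl | rfl
    · exact hedgeh j
    · simp only [sub_self, norm_zero]
      exact le_of_lt (mul_pos hε₁pos hDpos)
  -- key points are mutually close
  have hkeybound : ∀ a b : M, (∃ i : Fin n, a = x i ∨ a = y i) →
      (∃ i : Fin n, b = x i ∨ b = y i) → ‖h a - h b‖ ≤ 4 * n * (ε₁ * D) := by
    intro a b ⟨j, hja⟩ ⟨k, hkb⟩
    have hεD : 0 < ε₁ * D := mul_pos hε₁pos hDpos
    by_cases hjk : j = k
    · subst hjk
      have t1 := dist_triangle (h a) (h (y j)) (h b)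
      rw [dist_eq_norm, dist_eq_norm, dist_eq_norm] at t1
      have h1 := hWE j a hja
      have h2 := hWE j b hkb
      rw [norm_sub_rev] at h2
      exact stmt15_A1 n (ε₁ * D) _ _ _ hnR hεD t1 h1 h2
    · obtain ⟨m, i, hm1, hinj, ⟨ra, hra, hia⟩, ⟨rb, hrb, hib⟩, hcyc⟩ := halpha j k hjk
      have hmn : m ≤ n := by
        have hcard : ((Finset.range m).image i).card = m := by
          rw [Finset.card_image_of_injOn, Finset.card_range]
          intro r hr s hs hrs
          exact hinj r (Finset.mem_range.1 hr) s (Finset.mem_range.1 hs) hrs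
        calc m = ((Finset.range m).image i).card := hcard.symm
          _ ≤ (Finset.univ : Finset (Fin n)).card := Finset.card_le_card (Finset.subset_univ _)
          _ = n := by rw [Finset.card_univ, Fintype.card_fin]
      -- f is exactly tight on cross pairs
      have hfcross_sum : ∑ r ∈ Finset.range m,
          (dist (x (i r)) (y (i ((r + 1) % m))) - (f (x (i r)) - f (y (i ((r + 1) % m))))) = 0 := by
        rw [Finset.sum_sub_distrib, Finset.sum_sub_distrib]
        rw [stmt15_cycsum m hm1 (fun r => f (y (i r)))]
        have he : ∑ r ∈ Finset.range m, (f (x (i r)) - f (y (i r)))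
            = ∑ r ∈ Finset.range m, dist (x (i r)) (y (i r)) :=
          Finset.sum_congr rfl (fun r _ => hfi (i r))
        rw [Finset.sum_sub_distrib] at he
        linarith [hcyc]
      have hfcross : ∀ r < m, f (x (i r)) - f (y (i ((r + 1) % m)))
          = dist (x (i r)) (y (i ((r + 1) % m))) := by
        have hnn : ∀ r ∈ Finset.range m,
            0 ≤ dist (x (i r)) (y (i ((r + 1) % m))) - (f (x (i r)) - f (y (i ((r + 1) % m)))) :=
          fun r _ => by linarith [hfL (x (i r)) (y (i ((r + 1) % m)))]
        have hz := (Finset.sum_eq_zero_iff_of_nonneg hnn).1 hfcross_sum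
        intro r hr
        have := hz r (Finset.mem_range.2 hr)
        linarith
      -- g is near-tight on cross pairs
      have hgcross_sum : ∑ r ∈ Finset.range m,
          (dist (x (i r)) (y (i ((r + 1) % m))) - (g (x (i r)) - g (y (i ((r + 1) % m)))) v)
          = ∑ r ∈ Finset.range m,
          (dist (x (i r)) (y (i r)) - (g (x (i r)) - g (y (i r))) v) := by
        simp only [ContinuousLinearMap.sub_apply]
        rw [Finset.sum_sub_distrib, Finset.sum_sub_distrib, Finset.sum_sub_distrib,
          Finset.sum_sub_distrib]
        rw [stmt15_cycsum m hm1 (fun r => (g (y (i r))) v)]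
        linarith [hcyc]
      have hgcross : ∀ r < m, dist (x (i r)) (y (i ((r + 1) % m))) - δ₂ * θ
          ≤ (g (x (i r)) - g (y (i ((r + 1) % m)))) v := by
        intro r hr
        have hnn : ∀ s ∈ Finset.range m,
            0 ≤ dist (x (i s)) (y (i ((s + 1) % m))) - (g (x (i s)) - g (y (i ((s + 1) % m)))) v :=
          fun s _ => by linarith [hgub (x (i s)) (y (i ((s + 1) % m)))]
        have hsb : ∑ r ∈ Finset.range m,
            (dist (x (i r)) (y (i r)) - (g (x (i r)) - g (y (i r))) v) ≤ δ₂ * θ := by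
          calc ∑ r ∈ Finset.range m, (dist (x (i r)) (y (i r)) - (g (x (i r)) - g (y (i r))) v)
              ≤ ∑ _r ∈ Finset.range m, δ₂ * θ / (2 * n) :=
                Finset.sum_le_sum (fun r _ => hσbound (i r))
            _ = m * (δ₂ * θ / (2 * n)) := by
                rw [Finset.sum_const, Finset.card_range, nsmul_eq_mul]
            _ ≤ δ₂ * θ := by
                have hmR : (m:ℝ) ≤ n := by exact_mod_cast hmn
                have hq : 0 ≤ δ₂ * θ / (2 * n) := by positivity
                have e : (n:ℝ) * (δ₂ * θ / (2 * n)) = δ₂ * θ / 2 := by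
                  field_simp
                nlinarith [mul_le_mul_of_nonneg_right hmR hq, mul_pos hδ₂pos hθpos]
        have single := Finset.single_le_sum hnn (Finset.mem_range.2 hr)
        rw [hgcross_sum] at single
        linarith
      have hcrossh : ∀ r < m, ‖h (x (i r)) - h (y (i ((r + 1) % m)))‖ ≤ ε₁ * D := by
        intro r hr
        rw [hdiffeq, hfcross r hr]
        exact hpair ε₁ δ₂ hε₁pos hδ₂pos hδ₂ _ _ (hgcross r hr)
      -- chain along the cycle
      have hchain : ∀ r, r < m → ‖h (y (i r)) - h (y (i 0))‖ ≤ 2 * r * (ε₁ * D) := by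
        intro r
        induction r with
        | zero => intro _; simp
        | succ r ih =>
          intro hrm
          have hr : r < m := Nat.lt_of_succ_lt hrm
          have hmod : (r + 1) % m = r + 1 := Nat.mod_eq_of_lt hrm
          have h1 := hcrossh r hr
          rw [hmod] at h1
          have h2 := hedgeh (i r)
          have h3 := ih hr
          have t1 := dist_triangle (h (y (i (r + 1)))) (h (x (i r))) (h (y (i 0)))
          have t2 := dist_triangle (h (x (i r))) (h (y (i r))) (h (y (i 0)))
          rw [dist_eq_norm, dist_eq_norm, dist_eq_norm] at t1
          rw [dist_eq_norm, dist_eq_norm, dist_eq_norm] at t2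
          rw [norm_sub_rev] at h1
          push_cast
          exact stmt15_A2 r (ε₁ * D) _ _ _ _ _ (by positivity)
            (mul_pos hε₁pos hDpos) t1 h1 t2 h2 h3
      -- from a key point to the base of the cycle
      have hto0 : ∀ (c : M) (l : Fin n) (r : ℕ), r < m → i r = l → (c = x l ∨ c = y l) →
          ‖h c - h (y (i 0))‖ ≤ (2 * n - 1) * (ε₁ * D) := by
        intro c l r hr hil hc
        have h1 := hWE l c hc
        have h2 := hchain r hr
        rw [hil] at h2
        have t1 := dist_triangle (h c) (h (y l)) (h (y (i 0)))
        rw [dist_eq_norm, dist_eq_norm, dist_eq_norm] at t1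
        have hrR : (r:ℝ) ≤ (n:ℝ) - 1 := by
          have : r + 1 ≤ n := le_trans hr hmn
          have := (Nat.cast_le (α := ℝ)).2 this
          push_cast at this
          linarith
        exact stmt15_A3 n r (ε₁ * D) _ _ _ (by positivity) hrR
          (mul_pos hε₁pos hDpos) t1 h1 h2
      have ha0 := hto0 a j ra hra hia hja
      have hb0 := hto0 b k rb hrb hib hkb
      have t1 := dist_triangle (h a) (h (y (i 0))) (h b)
      rw [dist_eq_norm, dist_eq_norm, dist_eq_norm] at t1
      rw [norm_sub_rev] at hb0
      exact stmt15_A4 n (ε₁ * D) _ _ _ hnR hεD t1 ha0 hb0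
  -- the beta step
  have hβ : ∀ p : M, ∃ s : M, (∃ i : Fin n, s = x i ∨ s = y i) ∧ ‖h p - h s‖ ≤ ε₀ * D := by
    intro p
    obtain ⟨s, t, hst, hsk, htk, hft, hbtw⟩ := hbeta p
    refine ⟨s, hsk, ?_⟩
    have hts : ‖h t - h s‖ ≤ 4 * n * (ε₁ * D) := hkeybound t s htk hsk
    have hEv : dist t s - 4 * n * (ε₁ * D) ≤ (g t - g s) v := by
      have e1 : (h t - h s) v = (g t - g s) v - dist t s := by
        rw [hdiffeq, hft]
        simp [ContinuousLinearMap.sub_apply, ContinuousLinearMap.smul_apply, hxsv]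
      have e2 := hev (h t - h s)
      have e3 := neg_abs_le ((h t - h s) v)
      linarith
    have hgtp := hgub t p
    have h4n : 4 * n * (ε₁ * D) ≤ δ₁ * θ := hε₁key
    have htight : dist p s - δ₁ * θ ≤ (g p - g s) v := by
      have e4 : (g p - g s) v = (g t - g s) v - (g t - g p) v := by
        simp only [ContinuousLinearMap.sub_apply]; ring
      have e5 : dist t s = dist s t := dist_comm t s
      have e6 : dist p s = dist s p := dist_comm p s
      linarith
    have hg_ps := hpair ε₀ δ₁ hε₀pos hδ₁pos hδ₁ p s htight
    have hfps : f p - f s = dist p s := by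
      have h1 := hfL t p
      have h2 := hfL p s
      have e5 : dist t s = dist s t := dist_comm t s
      have e6 : dist p s = dist s p := dist_comm p s
      linarith
    rw [hdiffeq, hfps]
    exact hg_ps
  -- conclusion
  intro p
  obtain ⟨sp, hspk, hsp⟩ := hβ p
  obtain ⟨sz, hszk, hsz⟩ := hβ z
  have hhz : h z = 0 := by
    simp only [hhdef]
    simp [hg0, hf0]
  have hsz' : ‖h sz‖ ≤ ε₀ * D := by
    have e1 : h z - h sz = -h sz := by rw [hhz]; abel
    rw [e1, norm_neg] at hsz
    exact hsz
  have hmid : ‖h sp - h sz‖ ≤ 4 * n * (ε₁ * D) := hkeybound sp sz hspk hszk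
  have t1 := dist_triangle (h p) (h sp) (0 : X →L[ℝ] ℝ)
  have t2 := dist_triangle (h sp) (h sz) (0 : X →L[ℝ] ℝ)
  simp only [dist_eq_norm, sub_zero] at t1 t2
  have hfin : ‖h p‖ ≤ ε := by
    have hε₁D : ε₁ * D ≤ ε₀ * D := mul_le_mul_of_nonneg_right hε₁le₀ hDpos.le
    have h2' : ‖h sp‖ ≤ ‖h sp - h sz‖ + ε₀ * D := by linarith
    exact stmt15_A5 n ε₀ ε₁ D ε _ _ _ _ hnR (mul_pos hε₀pos hDpos) hε₁D hε₀eq t1 hsp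
      h2' hmid
  have : h p = g p - f p • xs := rfl
  rw [← this]
  exact hfin
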